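/- arXiv:2004.10587 — 6 statements merged into one kernel-verified Lean document; each statement's English description precedes it below -/
import Mathlib

section
/- Let g : ℝ≥0 → ℝ≥0 satisfy g(xy) = g(x)g(y) for all x,y, g(2) = 2, g monotone increasing, and g not identically zero on positive reals. Then g(x) = x for all x > 0. -/
/-- Sandwich: if `0 < a < b` then some integer power of 2 lies strictly between
`a^n` and `b^n` for some positive `n`. -/
lemma sandwich_pow_two (a b : ℝ) (ha : 0 < a) (hab : a < b) :
    ∃ (n : ℕ) (m : ℤ), 0 < n ∧ a ^ n < 2 ^ m ∧ (2:ℝ) ^ m < b ^ n := by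
  have hb : 0 < b := ha.trans hab
  have hl : Real.log a < Real.log b := Real.log_lt_log ha hab
  have hl2 : 0 < Real.log 2 := Real.log_pos (by norm_num)
  obtain ⟨n, hn⟩ := exists_nat_gt (2 * Real.log 2 / (Real.log b - Real.log a))
  have hd : 0 < Real.log b - Real.log a := by linarith
  have hn2 : 2 * Real.log 2 < n * (Real.log b - Real.log a) := by
    have := (div_lt_iff₀ hd).mp hn
    linarith
  have hn0 : 0 < n := by
    by_contra h
    push_neg at h
    interval_cases n
    simp at hn2
    nlinarith
  refine ⟨n, ⌈(n * Real.log a) / Real.log 2⌉ + 1, hn0, ?_, ?_⟩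
  · have hm : n * Real.log a < (⌈(n * Real.log a) / Real.log 2⌉ + 1 : ℤ) * Real.log 2 := by
      have h1 : (n * Real.log a) / Real.log 2 ≤ (⌈(n * Real.log a) / Real.log 2⌉ : ℝ) :=
        Int.le_ceil _
      have h2 : (n * Real.log a) / Real.log 2 * Real.log 2 ≤
          (⌈(n * Real.log a) / Real.log 2⌉ : ℝ) * Real.log 2 := by
        exact mul_le_mul_of_nonneg_right h1 hl2.le
      rw [div_mul_cancel₀ _ hl2.ne'] at h2
      push_cast
      nlinarith
    have hlog : Real.log (a ^ n) < Real.log ((2:ℝ) ^ (⌈(n * Real.log a) / Real.log 2⌉ + 1 : ℤ)) := by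
      rw [Real.log_pow, Real.log_zpow]
      exact_mod_cast hm
    have hpos2 : (0:ℝ) < (2:ℝ) ^ (⌈(n * Real.log a) / Real.log 2⌉ + 1 : ℤ) :=
      zpow_pos (by norm_num) _
    exact (Real.log_lt_log_iff (pow_pos ha n) hpos2).mp hlog
  · have hm : ((⌈(n * Real.log a) / Real.log 2⌉ + 1 : ℤ) : ℝ) * Real.log 2 < n * Real.log b := by
      have h1 : (⌈(n * Real.log a) / Real.log 2⌉ : ℝ) < (n * Real.log a) / Real.log 2 + 1 :=
        Int.ceil_lt_add_one _
      have h2 : (⌈(n * Real.log a) / Real.log 2⌉ : ℝ) * Real.log 2 <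
          ((n * Real.log a) / Real.log 2 + 1) * Real.log 2 :=
        mul_lt_mul_of_pos_right h1 hl2
      rw [add_mul, div_mul_cancel₀ _ hl2.ne'] at h2
      push_cast
      nlinarith
    have hpos2 : (0:ℝ) < (2:ℝ) ^ (⌈(n * Real.log a) / Real.log 2⌉ + 1 : ℤ) :=
      zpow_pos (by norm_num) _
    have hlog : Real.log ((2:ℝ) ^ (⌈(n * Real.log a) / Real.log 2⌉ + 1 : ℤ)) <
        Real.log (b ^ n) := by
      rw [Real.log_pow, Real.log_zpow]
      exact_mod_cast hm
    exact (Real.log_lt_log_iff hpos2 (pow_pos hb n)).mp hlog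

theorem multiplicative_monotone_normalized_is_id (g : NNReal → NNReal)
    (hmul : ∀ x y : NNReal, g (x * y) = g x * g y)
    (h2 : g 2 = 2)
    (hmono : Monotone g)
    (hnz : ¬ ∀ x : NNReal, 0 < x → g x = 0) :
    ∀ x : NNReal, 0 < x → g x = x := by
  push_neg at hnz
  obtain ⟨x0, hx0, hgx0⟩ := hnz
  have hg1 : g 1 = 1 := by
    have h := hmul x0 1
    rw [mul_one] at h
    have : g x0 * 1 = g x0 * g 1 := by rw [mul_one]; exact h
    exact (mul_left_cancel₀ hgx0 this).symm
  have hinv : ∀ x : NNReal, x ≠ 0 → g x * g x⁻¹ = 1 := by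
    intro x hx
    rw [← hmul, mul_inv_cancel₀ hx, hg1]
  have hpos : ∀ x : NNReal, 0 < x → g x ≠ 0 := by
    intro x hx h0
    have := hinv x hx.ne'
    rw [h0, zero_mul] at this
    exact zero_ne_one this
  have hpow : ∀ (x : NNReal) (n : ℕ), g (x ^ n) = g x ^ n := by
    intro x n
    induction n with
    | zero => simpa using hg1
    | succ k ih => rw [pow_succ, pow_succ, hmul, ih]
  have h2z : ∀ m : ℤ, g ((2:NNReal) ^ m) = 2 ^ m := by
    intro m
    obtain ⟨n, rfl | rfl⟩ := Int.eq_nat_or_neg m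
    · rw [zpow_natCast, hpow, h2]
    · have hne : ((2:NNReal) ^ (n:ℤ)) ≠ 0 := by positivity
      have hval : g ((2:NNReal) ^ (n:ℤ)) = 2 ^ (n:ℤ) := by
        rw [zpow_natCast, hpow, h2]
      have h1 := hinv ((2:NNReal) ^ (n:ℤ)) hne
      rw [hval] at h1
      rw [zpow_neg]
      exact (inv_eq_of_mul_eq_one_right h1).symm
  intro x hx
  have hgx : 0 < g x := pos_iff_ne_zero.mpr (hpos x hx)
  by_contra hne
  rcases lt_or_gt_of_ne hne with hlt | hgt
  · -- g x < x
    obtain ⟨n, m, hn, hA, hB⟩ := sandwich_pow_two (g x : ℝ) (x : ℝ) (by exact_mod_cast hgx)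
      (by exact_mod_cast hlt)
    have hA' : (g x) ^ n < (2:NNReal) ^ m := by
      rw [← NNReal.coe_lt_coe]
      push_cast
      exact hA
    have hB' : (2:NNReal) ^ m ≤ x ^ n := by
      rw [← NNReal.coe_le_coe]
      push_cast
      exact hB.le
    have : g (x ^ n) < g (x ^ n) := by
      calc g (x ^ n) = (g x) ^ n := hpow x n
        _ < (2:NNReal) ^ m := hA'
        _ = g ((2:NNReal) ^ m) := (h2z m).symm
        _ ≤ g (x ^ n) := hmono hB'
    exact lt_irrefl _ this
  · -- x < g x
    obtain ⟨n, m, hn, hA, hB⟩ := sandwich_pow_two (x : ℝ) (g x : ℝ) (by exact_mod_cast hx)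
      (by exact_mod_cast hgt)
    have hA' : x ^ n ≤ (2:NNReal) ^ m := by
      rw [← NNReal.coe_le_coe]
      push_cast
      exact hA.le
    have hB' : (2:NNReal) ^ m < (g x) ^ n := by
      rw [← NNReal.coe_lt_coe]
      push_cast
      exact hB
    have : g (x ^ n) < g (x ^ n) := by
      calc g (x ^ n) ≤ g ((2:NNReal) ^ m) := hmono hA'
        _ = (2:NNReal) ^ m := h2z m
        _ < (g x) ^ n := hB'
        _ = g (x ^ n) := (hpow x n).symm
    exact lt_irrefl _ this
end

section
/- Let α ≥ 1 and let p, q, r, s be finitely supported functions from finite types 𝒳, 𝒴 to the nonnegative reals, with support of p, r contained in the support of q, s respectively. Suppose T : 𝒳 × 𝒴 → ℝ≥0 is substochastic, i.e. ∑_y T(x,y) ≤ 1 for every x, and suppose ∑_x T(x,y) p(x) ≥ r(y) and ∑_x T(x,y) q(x) = s(y) for every y. Then ∑_{y ∈ supp s} r(y)^α s(y)^(1-α) ≤ ∑_{x ∈ supp q} p(x)^α q(x)^(1-α). -/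
open Finset

theorem renyi_quasi_entropy_data_processing
    {X Y : Type} [Fintype X] [Fintype Y] [DecidableEq X] [DecidableEq Y]
    (α : ℝ) (hα : 1 ≤ α)
    (p q : X → ℝ) (r s : Y → ℝ)
    (hp : ∀ x, 0 ≤ p x) (hq : ∀ x, 0 ≤ q x)
    (hr : ∀ y, 0 ≤ r y) (hs : ∀ y, 0 ≤ s y)
    (hpq : ∀ x, q x = 0 → p x = 0) (hrs : ∀ y, s y = 0 → r y = 0)
    (T : X → Y → ℝ)
    (hT : ∀ x y, 0 ≤ T x y)
    (hTsub : ∀ x, ∑ y, T x y ≤ 1)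
    (hTp : ∀ y, r y ≤ ∑ x, T x y * p x)
    (hTq : ∀ y, ∑ x, T x y * q x = s y) :
    ∑ y ∈ univ.filter (fun y => s y ≠ 0), r y ^ α * s y ^ (1 - α)
      ≤ ∑ x ∈ univ.filter (fun x => q x ≠ 0), p x ^ α * q x ^ (1 - α) := by
  set g : X → ℝ := fun x => if q x = 0 then 0 else p x / q x with hg
  have hg0 : ∀ x, 0 ≤ g x := by
    intro x
    simp only [hg]
    split_ifs with h
    · exact le_rfl
    · exact div_nonneg (hp x) (hq x)
  have hqg : ∀ x, q x * g x = p x := by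
    intro x
    simp only [hg]
    split_ifs with h
    · simp [h, hpq x h]
    · field_simp
  have key : ∀ y, s y ≠ 0 → r y ^ α * s y ^ (1 - α) ≤ ∑ x, T x y * q x * g x ^ α := by
    intro y hy
    have hsy : 0 < s y := (hs y).lt_of_ne (Ne.symm hy)
    have hw0 : ∀ x ∈ (univ : Finset X), 0 ≤ T x y * q x / s y :=
      fun x _ => div_nonneg (mul_nonneg (hT x y) (hq x)) hsy.le
    have hw1 : ∑ x, T x y * q x / s y = 1 := by
      rw [← Finset.sum_div, hTq y, div_self hy]
    have hmem : ∀ x ∈ (univ : Finset X), g x ∈ Set.Ici (0 : ℝ) :=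
      fun x _ => Set.mem_Ici.mpr (hg0 x)
    have hconv := (convexOn_rpow hα).map_sum_le hw0 hw1 hmem
    simp only [smul_eq_mul] at hconv
    have hsum : ∑ x, T x y * q x / s y * g x = (∑ x, T x y * p x) / s y := by
      rw [Finset.sum_div]
      refine Finset.sum_congr rfl fun x _ => ?_
      rw [div_mul_eq_mul_div, mul_assoc, hqg x]
    have h1 : r y / s y ≤ ∑ x, T x y * q x / s y * g x := by
      rw [hsum]
      gcongr
      exact hTp y
    have h2 : (r y / s y) ^ α ≤ (∑ x, T x y * q x / s y * g x) ^ α :=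
      Real.rpow_le_rpow (div_nonneg (hr y) hsy.le) h1 (le_trans zero_le_one hα)
    have h4 : (r y / s y) ^ α ≤ ∑ x, T x y * q x / s y * g x ^ α := h2.trans hconv
    have h5 : s y * (r y / s y) ^ α ≤ s y * ∑ x, T x y * q x / s y * g x ^ α :=
      mul_le_mul_of_nonneg_left h4 hsy.le
    calc r y ^ α * s y ^ (1 - α)
        = s y * (r y / s y) ^ α := by
          rw [Real.div_rpow (hr y) hsy.le, Real.rpow_sub hsy, Real.rpow_one]
          ring
      _ ≤ s y * ∑ x, T x y * q x / s y * g x ^ α := h5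
      _ = ∑ x, T x y * q x * g x ^ α := by
          rw [Finset.mul_sum]
          refine Finset.sum_congr rfl fun x _ => ?_
          field_simp
  calc ∑ y ∈ univ.filter (fun y => s y ≠ 0), r y ^ α * s y ^ (1 - α)
      ≤ ∑ y ∈ univ.filter (fun y => s y ≠ 0), ∑ x, T x y * q x * g x ^ α := by
        refine Finset.sum_le_sum fun y hy => ?_
        exact key y (by simpa using hy)
    _ ≤ ∑ y, ∑ x, T x y * q x * g x ^ α := by
        refine Finset.sum_le_sum_of_subset_of_nonneg (Finset.filter_subset _ _) ?_
        intro y _ _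
        exact Finset.sum_nonneg fun x _ =>
          mul_nonneg (mul_nonneg (hT x y) (hq x)) (Real.rpow_nonneg (hg0 x) α)
    _ = ∑ x, (∑ y, T x y) * (q x * g x ^ α) := by
        rw [Finset.sum_comm]
        refine Finset.sum_congr rfl fun x _ => ?_
        rw [Finset.sum_mul]
        exact Finset.sum_congr rfl fun y _ => by ring
    _ ≤ ∑ x, q x * g x ^ α := by
        refine Finset.sum_le_sum fun x _ => ?_
        have hnn : 0 ≤ q x * g x ^ α := mul_nonneg (hq x) (Real.rpow_nonneg (hg0 x) α)
        calc (∑ y, T x y) * (q x * g x ^ α) ≤ 1 * (q x * g x ^ α) :=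
              mul_le_mul_of_nonneg_right (hTsub x) hnn
          _ = q x * g x ^ α := one_mul _
    _ = ∑ x ∈ univ.filter (fun x => q x ≠ 0), p x ^ α * q x ^ (1 - α) := by
        rw [← Finset.sum_filter_of_ne (f := fun x => q x * g x ^ α)
          (p := fun x => q x ≠ 0) (by
            intro x _ hne hqx0
            exact hne (by simp [hqx0]))]
        refine Finset.sum_congr rfl fun x hx => ?_
        have hqx : q x ≠ 0 := by simpa using hx
        have hqpos : 0 < q x := (hq x).lt_of_ne (Ne.symm hqx)
        have : g x = p x / q x := by simp [hg, hqx]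
        rw [this, Real.div_rpow (hp x) hqpos.le, Real.rpow_sub hqpos, Real.rpow_one]
        field_simp
end

section
/- Let A be a normal operator on a finite-dimensional complex Hilbert space H with spectral projections P_λ for λ in the spectrum of A, and define the pinching map 𝒫_A(X) = ∑_λ P_λ X P_λ. Then for every positive semidefinite X, X ≤ |spec(A)| · 𝒫_A(X). -/
open Matrix
open scoped ComplexOrder

lemma posSemidef_smul_nonneg {n : Type} [Fintype n] {M : Matrix n n ℂ}
    (hM : M.PosSemidef) {c : ℂ} (hc : 0 ≤ c) : (c • M).PosSemidef := by
  refine posSemidef_iff_dotProduct_mulVec.mpr ⟨?_, ?_⟩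
  · have hcr : star c = c := by
      rw [Complex.star_def]
      exact Complex.conj_eq_iff_im.mpr (Complex.nonneg_iff.mp hc).2.symm
    rw [IsHermitian, conjTranspose_smul, hM.1.eq, hcr]
  · intro x
    rw [smul_mulVec, dotProduct_smul]
    exact mul_nonneg hc (hM.dotProduct_mulVec_nonneg x)

lemma posSemidef_sum {n ι : Type} [Fintype n] [Fintype ι] {f : ι → Matrix n n ℂ}
    (h : ∀ i, (f i).PosSemidef) : (∑ i, f i).PosSemidef := by
  classical
  refine Finset.sum_induction f _ (fun a b ha hb => ha.add hb) .zero (fun i _ => h i)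

/-- The pinching inequality: if `A` is a normal operator with spectral decomposition
`A = ∑ λ_i • P_i` (the `P_i` pairwise orthogonal nonzero projections summing to the identity,
with distinct eigenvalues `λ_i`), then for every positive semidefinite `X` we have
`X ≤ |spec A| • ∑ i, P i * X * P i` in the Loewner order. -/
theorem pinching_inequality {d : Type} [Fintype d] [DecidableEq d]
    {ι : Type} [Fintype ι]
    (A : Matrix d d ℂ) (hA : A * Aᴴ = Aᴴ * A)
    (lam : ι → ℂ) (hlam : Function.Injective lam)
    (P : ι → Matrix d d ℂ)
    (hproj : ∀ i, P i * P i = P i ∧ (P i)ᴴ = P i)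
    (hPne : ∀ i, P i ≠ 0)
    (horth : ∀ i j, i ≠ j → P i * P j = 0)
    (hsum : ∑ i, P i = 1)
    (hdecomp : A = ∑ i, lam i • P i)
    (X : Matrix d d ℂ) (hX : X.PosSemidef) :
    ((Fintype.card ι : ℂ) • (∑ i, P i * X * P i) - X).PosSemidef := by
  classical
  have hXa : ∑ i : ι, ∑ j : ι, P i * X * P j = X := by
    have h2 : ∀ i, ∑ j : ι, P i * X * P j = P i * X := by
      intro i; rw [← Finset.mul_sum, hsum, mul_one]
    simp only [h2, ← Finset.sum_mul, hsum, one_mul]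
  have hXb : ∑ i : ι, ∑ j : ι, P j * X * P i = X := by
    rw [Finset.sum_comm]; exact hXa
  have key : ((Fintype.card ι : ℂ) • (∑ i, P i * X * P i) - X)
      = (1/2 : ℂ) • ∑ i, ∑ j, (P i - P j) * X * (P i - P j)ᴴ := by
    have expand : ∀ i j : ι, (P i - P j) * X * (P i - P j)ᴴ
        = P i * X * P i - P i * X * P j - P j * X * P i + P j * X * P j := by
      intro i j
      rw [conjTranspose_sub, (hproj i).2, (hproj j).2]
      noncomm_ring
    have h1 : ∑ i : ι, ∑ j : ι, (P i - P j) * X * (P i - P j)ᴴ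
        = (Fintype.card ι : ℂ) • (∑ i, P i * X * P i)
          + (Fintype.card ι : ℂ) • (∑ i, P i * X * P i) - X - X := by
      simp only [expand, Finset.sum_add_distrib, Finset.sum_sub_distrib, Finset.sum_const,
        Finset.card_univ, hXa, hXb, ← Finset.smul_sum]
      simp only [Nat.cast_smul_eq_nsmul]
      abel
    rw [h1]
    match_scalars <;> ring
  rw [key]
  have hc : (0:ℂ) ≤ 1/2 := by
    rw [Complex.le_def]; norm_num
  exact posSemidef_smul_nonneg
    (posSemidef_sum fun i => posSemidef_sum fun j => hX.mul_mul_conjTranspose_same _) hc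
end

section
/- For α ≥ 1, the map M ↦ Tr M^α is monotone increasing and convex on the cone of positive semidefinite operators on a finite-dimensional Hilbert space: if 0 ≤ M ≤ N then Tr M^α ≤ Tr N^α, and Tr(tM + (1-t)N)^α ≤ t·Tr M^α + (1-t)·Tr N^α for t ∈ [0,1]. -/
open Matrix
open scoped ComplexOrder

section Aux

variable {ι : Type} [Fintype ι] [DecidableEq ι]

lemma entry_eq_quadform (A : Matrix ι ι ℂ) (U : Matrix ι ι ℂ) (i : ι) :
    (star U * A * (U : Matrix ι ι ℂ)) i i = dotProduct (star fun a => U a i) (A *ᵥ fun a => U a i) := by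
  simp only [Matrix.mul_apply, dotProduct, Matrix.mulVec, dotProduct,
    Matrix.star_apply, Pi.star_apply, Finset.sum_mul, Finset.mul_sum]
  rw [Finset.sum_comm]
  refine Finset.sum_congr rfl fun a _ => Finset.sum_congr rfl fun b _ => by ring

lemma re_entry_nonneg {A : Matrix ι ι ℂ} (hA : A.PosSemidef) (U : Matrix ι ι ℂ) (i : ι) :
    0 ≤ ((star U * A * (U : Matrix ι ι ℂ)) i i).re := by
  rw [entry_eq_quadform]
  have := hA.dotProduct_mulVec_nonneg (fun a => U a i)
  rw [Complex.le_def] at this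
  simpa using this.1

/-- Peierls-type inequality: for PSD `A` and unitary `U`,
`∑ i, (re (Uᴴ A U) i i)^α ≤ ∑ j, λ_j(A)^α`. -/
lemma peierls {A : Matrix ι ι ℂ} (hA : A.PosSemidef) (U : Matrix.unitaryGroup ι ℂ)
    {α : ℝ} (hα : 1 ≤ α) :
    ∑ i, ((star (U : Matrix ι ι ℂ) * A * (U : Matrix ι ι ℂ)) i i).re ^ α
      ≤ ∑ j, hA.1.eigenvalues j ^ α := by
  classical
  set Pu : Matrix.unitaryGroup ι ℂ := star U * hA.1.eigenvectorUnitary with hPdef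
  set P : Matrix ι ι ℂ := (Pu : Matrix ι ι ℂ) with hP
  set lam := hA.1.eigenvalues with hlam
  set D : Matrix ι ι ℂ := diagonal (RCLike.ofReal ∘ lam) with hD
  have hPc : P = star (U : Matrix ι ι ℂ) * (hA.1.eigenvectorUnitary : Matrix ι ι ℂ) := rfl
  have hconj : star (U : Matrix ι ι ℂ) * A * (U : Matrix ι ι ℂ) = P * D * star P := by
    rw [hPc, Matrix.star_mul, star_star]
    conv_lhs => rw [hA.1.spectral_theorem, Unitary.conjStarAlgAut_apply]
    noncomm_ring
  set w : ι → ι → ℝ := fun i j => Complex.normSq (P i j) with hw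
  have hw_nonneg : ∀ i j, 0 ≤ w i j := fun i j => Complex.normSq_nonneg _
  have hDjj : ∀ j, D j j = ((lam j : ℝ) : ℂ) := by
    intro j
    rw [hD, Matrix.diagonal_apply_eq]
    rfl
  have hterm : ∀ i j, (P * D) i j * star P j i = ((w i j * lam j : ℝ) : ℂ) := by
    intro i j
    rw [Matrix.mul_diagonal, Matrix.star_apply, RCLike.star_def]
    have h1 : P i j * (starRingEnd ℂ) (P i j) = ((w i j : ℝ) : ℂ) := by
      rw [Complex.mul_conj]
    have h2 : (RCLike.ofReal ∘ lam : ι → ℂ) j = ((lam j : ℝ) : ℂ) := by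
      simpa [hD] using hDjj j
    calc P i j * (RCLike.ofReal ∘ lam : ι → ℂ) j * (starRingEnd ℂ) (P i j)
        = (P i j * (starRingEnd ℂ) (P i j)) * ((lam j : ℝ) : ℂ) := by rw [h2]; ring
      _ = ((w i j * lam j : ℝ) : ℂ) := by rw [h1]; push_cast; ring
  have hentry : ∀ i, ((star (U : Matrix ι ι ℂ) * A * (U : Matrix ι ι ℂ)) i i).re
      = ∑ j, w i j * lam j := by
    intro i
    rw [hconj, Matrix.mul_apply]
    simp_rw [hterm]
    rw [← Complex.ofReal_sum]
    exact Complex.ofReal_re _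
  have hsum_aux : ∀ i j, P i j * star P j i = ((w i j : ℝ) : ℂ) := by
    intro i j
    rw [Matrix.star_apply, RCLike.star_def, Complex.mul_conj]
  have hrow : ∀ i, ∑ j, w i j = 1 := by
    intro i
    have h1 : (P * star P) i i = 1 := by
      rw [hP, Matrix.mem_unitaryGroup_iff.mp Pu.2]
      exact Matrix.one_apply_eq i
    rw [Matrix.mul_apply] at h1
    have h2 : (((∑ j, w i j : ℝ)) : ℂ) = 1 := by
      rw [← h1, Complex.ofReal_sum]
      exact Finset.sum_congr rfl fun j _ => (hsum_aux i j).symm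
    exact_mod_cast h2
  have hcol : ∀ j, ∑ i, w i j = 1 := by
    intro j
    have h1 : (star P * P) j j = 1 := by
      rw [hP, Matrix.mem_unitaryGroup_iff'.mp Pu.2]
      exact Matrix.one_apply_eq j
    rw [Matrix.mul_apply] at h1
    have h2 : (((∑ i, w i j : ℝ)) : ℂ) = 1 := by
      rw [← h1, Complex.ofReal_sum]
      refine Finset.sum_congr rfl fun i _ => ?_
      rw [mul_comm] at *
      exact (hsum_aux i j).symm
    exact_mod_cast h2
  have hlam_nonneg : ∀ j, 0 ≤ lam j := hA.eigenvalues_nonneg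
  calc ∑ i, ((star (U : Matrix ι ι ℂ) * A * (U : Matrix ι ι ℂ)) i i).re ^ α
      ≤ ∑ i, ∑ j, w i j * lam j ^ α := by
        refine Finset.sum_le_sum fun i _ => ?_
        rw [hentry i]
        have := (convexOn_rpow hα).map_sum_le (t := Finset.univ)
          (w := w i) (p := lam) (fun j _ => hw_nonneg i j) (hrow i)
          (fun j _ => hlam_nonneg j)
        simpa [smul_eq_mul] using this
    _ = ∑ j, lam j ^ α := by
        rw [Finset.sum_comm]
        refine Finset.sum_congr rfl fun j _ => ?_
        rw [← Finset.sum_mul, hcol j, one_mul]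

end Aux

open scoped Classical in
/-- `Tr M^α` for a Hermitian matrix `M`, defined via its eigenvalues (real exponent `α`). -/
noncomputable def traceRpow {ι : Type} [Fintype ι] [DecidableEq ι]
    (M : Matrix ι ι ℂ) (α : ℝ) : ℝ :=
  if h : M.IsHermitian then ∑ i, (h.eigenvalues i) ^ α else 0

lemma traceRpow_eq {ι : Type} [Fintype ι] [DecidableEq ι]
    {M : Matrix ι ι ℂ} (h : M.IsHermitian) (α : ℝ) :
    traceRpow M α = ∑ i, (h.eigenvalues i) ^ α := by
  rw [traceRpow, dif_pos h]

/-- For `α ≥ 1`, the map `M ↦ Tr M^α` is monotone and convex on positive semidefinite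
matrices. -/
theorem traceRpow_monotone_and_convex {ι : Type} [Fintype ι] [DecidableEq ι]
    (α : ℝ) (hα : 1 ≤ α) :
    (∀ M N : Matrix ι ι ℂ, M.PosSemidef → (N - M).PosSemidef →
      traceRpow M α ≤ traceRpow N α) ∧
    (∀ M N : Matrix ι ι ℂ, M.PosSemidef → N.PosSemidef → ∀ t : ℝ, 0 ≤ t → t ≤ 1 →
      traceRpow (((t : ℂ) • M) + (((1 - t : ℝ) : ℂ) • N)) α
        ≤ t * traceRpow M α + (1 - t) * traceRpow N α) := by
  constructor
  · intro M N hM hNM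
    have hN : N.PosSemidef := by
      have := hNM.add hM
      simpa using this
    set U := hM.1.eigenvectorUnitary with hU
    have hdiag : star (U : Matrix ι ι ℂ) * M * (U : Matrix ι ι ℂ)
        = diagonal (RCLike.ofReal ∘ hM.1.eigenvalues) := by
        rw [← hM.1.conjStarAlgAut_star_eigenvectorUnitary, Unitary.conjStarAlgAut_star_apply]
    rw [traceRpow_eq hM.1, traceRpow_eq hN.1]
    calc ∑ i, hM.1.eigenvalues i ^ α
        = ∑ i, ((star (U : Matrix ι ι ℂ) * M * (U : Matrix ι ι ℂ)) i i).re ^ α := by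
          refine Finset.sum_congr rfl fun i _ => ?_
          rw [hdiag]
          simp
      _ ≤ ∑ i, ((star (U : Matrix ι ι ℂ) * N * (U : Matrix ι ι ℂ)) i i).re ^ α := by
          refine Finset.sum_le_sum fun i _ => ?_
          refine Real.rpow_le_rpow (re_entry_nonneg hM _ i) ?_ (le_trans zero_le_one hα)
          have hdiff : ((star (U : Matrix ι ι ℂ) * (N - M) * (U : Matrix ι ι ℂ)) i i).re
              = ((star (U : Matrix ι ι ℂ) * N * (U : Matrix ι ι ℂ)) i i).re
                - ((star (U : Matrix ι ι ℂ) * M * (U : Matrix ι ι ℂ)) i i).re := by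
            simp [Matrix.mul_sub, Matrix.sub_mul, Matrix.sub_apply]
          have := re_entry_nonneg hNM (U : Matrix ι ι ℂ) i
          rw [hdiff] at this
          linarith
      _ ≤ ∑ j, hN.1.eigenvalues j ^ α := peierls hN U hα
  · intro M N hM hN t ht0 ht1
    have h1t : (0:ℝ) ≤ 1 - t := by linarith
    have hA : (((t : ℂ) • M) + (((1 - t : ℝ) : ℂ) • N)).PosSemidef := by
      have hsM : ((t : ℂ) • M).PosSemidef := by
        refine .of_dotProduct_mulVec_nonneg ?_ fun x => ?_
        · unfold Matrix.IsHermitian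
          rw [Matrix.conjTranspose_smul, hM.1]
          congr 1
          simp [RCLike.star_def, Complex.conj_ofReal]
        · rw [Matrix.smul_mulVec, dotProduct_smul]
          exact mul_nonneg (by exact_mod_cast Complex.zero_le_real.mpr ht0) (hM.dotProduct_mulVec_nonneg x)
      have hsN : ((((1 - t : ℝ)) : ℂ) • N).PosSemidef := by
        refine .of_dotProduct_mulVec_nonneg ?_ fun x => ?_
        · unfold Matrix.IsHermitian
          rw [Matrix.conjTranspose_smul, hN.1]
          congr 1
          simp [RCLike.star_def, Complex.conj_ofReal]
        · rw [Matrix.smul_mulVec, dotProduct_smul]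
          exact mul_nonneg (by exact_mod_cast Complex.zero_le_real.mpr h1t) (hN.dotProduct_mulVec_nonneg x)
      exact hsM.add hsN
    set A := ((t : ℂ) • M) + (((1 - t : ℝ) : ℂ) • N) with hAdef
    set U := hA.1.eigenvectorUnitary with hU
    have hdiag : star (U : Matrix ι ι ℂ) * A * (U : Matrix ι ι ℂ)
        = diagonal (RCLike.ofReal ∘ hA.1.eigenvalues) := by
        rw [← hA.1.conjStarAlgAut_star_eigenvectorUnitary, Unitary.conjStarAlgAut_star_apply]
    have hsplit : ∀ i, hA.1.eigenvalues i
        = t * ((star (U : Matrix ι ι ℂ) * M * (U : Matrix ι ι ℂ)) i i).re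
          + (1 - t) * ((star (U : Matrix ι ι ℂ) * N * (U : Matrix ι ι ℂ)) i i).re := by
      intro i
      have h1 : ((star (U : Matrix ι ι ℂ) * A * (U : Matrix ι ι ℂ)) i i).re = hA.1.eigenvalues i := by
        rw [hdiag]; simp
      rw [← h1, hAdef]
      have h2 : star (U : Matrix ι ι ℂ) * ((t : ℂ) • M + (((1 - t : ℝ)) : ℂ) • N) * (U : Matrix ι ι ℂ)
          = (t : ℂ) • (star (U : Matrix ι ι ℂ) * M * (U : Matrix ι ι ℂ))
            + (((1 - t : ℝ)) : ℂ) • (star (U : Matrix ι ι ℂ) * N * (U : Matrix ι ι ℂ)) := by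
        rw [Matrix.mul_add, Matrix.add_mul]
        congr 1 <;> rw [Matrix.mul_smul, Matrix.smul_mul]
      rw [h2]
      simp [Matrix.add_apply, Matrix.smul_apply, Complex.ofReal_mul, smul_eq_mul,
        Complex.add_re, Complex.mul_re, Complex.ofReal_re, Complex.ofReal_im]
    rw [traceRpow_eq hA.1, traceRpow_eq hM.1, traceRpow_eq hN.1]
    calc ∑ i, hA.1.eigenvalues i ^ α
        ≤ ∑ i, (t * ((star (U : Matrix ι ι ℂ) * M * (U : Matrix ι ι ℂ)) i i).re ^ α
            + (1 - t) * ((star (U : Matrix ι ι ℂ) * N * (U : Matrix ι ι ℂ)) i i).re ^ α) := by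
          refine Finset.sum_le_sum fun i _ => ?_
          rw [hsplit i]
          have := (convexOn_rpow hα).2
            (Set.mem_Ici.mpr (re_entry_nonneg hM (U : Matrix ι ι ℂ) i))
            (Set.mem_Ici.mpr (re_entry_nonneg hN (U : Matrix ι ι ℂ) i)) ht0 h1t (by ring)
          simpa [smul_eq_mul] using this
      _ = t * ∑ i, ((star (U : Matrix ι ι ℂ) * M * (U : Matrix ι ι ℂ)) i i).re ^ α
            + (1 - t) * ∑ i, ((star (U : Matrix ι ι ℂ) * N * (U : Matrix ι ι ℂ)) i i).re ^ α := by
          rw [Finset.sum_add_distrib, Finset.mul_sum, Finset.mul_sum]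
      _ ≤ t * ∑ j, hM.1.eigenvalues j ^ α + (1 - t) * ∑ j, hN.1.eigenvalues j ^ α := by
          exact add_le_add (mul_le_mul_of_nonneg_left (peierls hM U hα) ht0)
            (mul_le_mul_of_nonneg_left (peierls hN U hα) h1t)
end

section
/- The dichotomy u = (3,2) on ℂ is power universal: for every dichotomy (ρ,σ) (positive semidefinite operators on a finite-dimensional Hilbert space with supp ρ ⊆ supp σ, ρ ≠ 0), there exists k ∈ ℕ such that (3^k, 2^k) ≽ (ρ,σ) and (3^k ρ, 2^k σ) ≽ (1,1) in the dichotomy preorder. -/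
open Matrix
open scoped Kronecker ComplexOrder

/-- `T` is a completely positive trace-nonincreasing linear map between matrix algebras,
expressed via a Kraus representation `T X = ∑ i, K i * X * (K i)ᴴ` with `∑ i, (K i)ᴴ * K i ≤ 1`. -/
def IsCPTNI {ι κ : Type} [Fintype ι] [DecidableEq ι] [Fintype κ] [DecidableEq κ]
    (T : Matrix ι ι ℂ →ₗ[ℂ] Matrix κ κ ℂ) : Prop :=
  ∃ (m : ℕ) (K : Fin m → Matrix κ ι ℂ),
    (∀ X, T X = ∑ i, K i * X * (K i)ᴴ) ∧
    ((1 : Matrix ι ι ℂ) - ∑ i, (K i)ᴴ * K i).PosSemidef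

/-- `supp ρ ⊆ supp σ`, expressed as inclusion of kernels: `ker σ ⊆ ker ρ`. -/
def SuppLE {ι : Type} [Fintype ι] (ρ σ : Matrix ι ι ℂ) : Prop :=
  ∀ v : ι → ℂ, σ.mulVec v = 0 → ρ.mulVec v = 0

section Helpers
variable {n : Type} [Fintype n] [DecidableEq n]

lemma psd_real_smul_one {r : ℝ} (hr : 0 ≤ r) :
    ((r : ℂ) • (1 : Matrix n n ℂ)).PosSemidef := by
  have h : (r : ℂ) • (1 : Matrix n n ℂ) = Matrix.diagonal (fun _ => (r : ℂ)) := by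
    ext i j
    by_cases hij : i = j <;>
      simp [hij, Matrix.one_apply, Matrix.diagonal_apply]
  rw [h]
  exact Matrix.PosSemidef.diagonal fun i => Complex.zero_le_real.mpr hr

lemma psd_real_smul {r : ℝ} (hr : 0 ≤ r) {A : Matrix n n ℂ} (hA : A.PosSemidef) :
    ((r : ℂ) • A).PosSemidef := by
  refine Matrix.PosSemidef.of_dotProduct_mulVec_nonneg ?_ ?_
  · unfold Matrix.IsHermitian
    rw [Matrix.conjTranspose_smul, hA.1]
    congr 1
    exact Complex.conj_ofReal r
  · intro x
    rw [Matrix.smul_mulVec, dotProduct_smul, smul_eq_mul]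
    exact mul_nonneg (Complex.zero_le_real.mpr hr) (hA.dotProduct_mulVec_nonneg x)

lemma psd_col_zero {B : Matrix n n ℂ} {v : n → ℂ}
    (h : (Bᴴ * B) *ᵥ v = 0) : B *ᵥ v = 0 := by
  have h0 : star v ⬝ᵥ (Bᴴ * B) *ᵥ v = 0 := by rw [h, dotProduct_zero]
  rw [← Matrix.mulVec_mulVec, Matrix.dotProduct_mulVec, vecMul_conjTranspose, star_star,
    dotProduct_star_self_eq_zero] at h0
  exact h0

lemma star_single_one (i : n) : star (Pi.single i 1 : n → ℂ) = Pi.single i 1 := by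
  ext j
  by_cases h : j = i <;> simp [h, Pi.single_apply]

lemma diag_nonneg {A : Matrix n n ℂ} (hA : A.PosSemidef) (i : n) : 0 ≤ A i i := by
  have := hA.dotProduct_mulVec_nonneg (Pi.single i 1)
  simpa [star_single_one, single_dotProduct] using this

lemma trace_pos_of_psd_ne_zero {A : Matrix n n ℂ} (hA : A.PosSemidef) (h : A ≠ 0) :
    0 < A.trace.re ∧ A.trace.im = 0 := by
  have htr : 0 ≤ A.trace := by
    rw [Matrix.trace]
    exact Finset.sum_nonneg fun i _ => diag_nonneg hA i
  have hne : A.trace ≠ 0 := by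
    intro h0
    apply h
    have hdiag : ∀ i, A i i = 0 := by
      intro i
      have := (Finset.sum_eq_zero_iff_of_nonneg (fun i _ => diag_nonneg hA i)).mp h0 i
        (Finset.mem_univ i)
      simpa [Matrix.diag] using this
    have hcol : ∀ i, A *ᵥ Pi.single i 1 = 0 := by
      intro i
      rw [← hA.dotProduct_mulVec_zero_iff]
      simpa [star_single_one, single_dotProduct] using hdiag i
    ext j i
    have := congrFun (hcol i) j
    simpa using this
  have hlt : 0 < A.trace := lt_of_le_of_ne htr (Ne.symm hne)
  rw [Complex.lt_def] at hlt
  exact ⟨by simpa using hlt.1, hlt.2.symm⟩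

end Helpers

open scoped MatrixOrder in
lemma psd_eq_conjTranspose_mul_self {n : Type} [Fintype n] [DecidableEq n] {A : Matrix n n ℂ}
    (hA : A.PosSemidef) : ∃ B : Matrix n n ℂ, A = Bᴴ * B := by
  obtain ⟨B, hB⟩ := CStarAlgebra.nonneg_iff_eq_star_mul_self.mp hA.nonneg
  exact ⟨B, hB⟩

section Main
variable {d : Type} [Fintype d] [DecidableEq d]

open Finset in
lemma exists_smul_sub_posSemidef (ρ σ : Matrix d d ℂ)
    (hρ : ρ.PosSemidef) (hσ : σ.PosSemidef)
    (hsupp : ∀ v : d → ℂ, σ *ᵥ v = 0 → ρ *ᵥ v = 0) :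
    ∃ C : ℝ, 0 ≤ C ∧ (((C : ℂ)) • σ - ρ).PosSemidef := by
  classical
  obtain ⟨B, hB⟩ := psd_eq_conjTranspose_mul_self hρ
  set U : Matrix d d ℂ := (hσ.1.eigenvectorUnitary : Matrix d d ℂ) with hU
  set lam : d → ℝ := hσ.1.eigenvalues with hlam
  have hlam0 : ∀ i, 0 ≤ lam i := hσ.eigenvalues_nonneg
  have hUU' : U * Uᴴ = 1 := by
    rw [← Matrix.star_eq_conjTranspose]
    exact (Matrix.mem_unitaryGroup_iff).mp hσ.1.eigenvectorUnitary.2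
  have hU'U : Uᴴ * U = 1 := by
    rw [← Matrix.star_eq_conjTranspose]
    exact (Matrix.mem_unitaryGroup_iff').mp hσ.1.eigenvectorUnitary.2
  set B' : Matrix d d ℂ := B * U with hB'
  set D : Matrix d d ℂ := Matrix.diagonal (fun i => (lam i : ℂ)) with hD
  have hspec : σ = U * D * Uᴴ := by
    rw [← Matrix.star_eq_conjTranspose]
    exact hσ.1.spectral_theorem
  -- columns of B' with zero eigenvalue vanish
  have hcol : ∀ i, lam i = 0 → ∀ j, B' j i = 0 := by
    intro i hi j
    have h1 : σ *ᵥ ⇑(hσ.1.eigenvectorBasis i) = 0 := by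
      rw [hσ.1.mulVec_eigenvectorBasis, ← hlam, hi]
      simp
    have h2 : ρ *ᵥ ⇑(hσ.1.eigenvectorBasis i) = 0 := hsupp _ h1
    have h3 : B *ᵥ ⇑(hσ.1.eigenvectorBasis i) = 0 := by
      apply psd_col_zero
      rw [← hB]; exact h2
    have h4 : B' *ᵥ Pi.single i 1 = 0 := by
      rw [hB', ← Matrix.mulVec_mulVec, Matrix.IsHermitian.eigenvectorUnitary_mulVec, h3]
    have := congrFun h4 j
    simpa using this
  set S : Finset d := Finset.univ.filter (fun i => lam i ≠ 0) with hS
  set C : ℝ := ∑ j : d, ∑ i ∈ S, ‖B' j i‖ ^ 2 / lam i with hC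
  have hC0 : 0 ≤ C := by
    apply Finset.sum_nonneg; intro j _
    apply Finset.sum_nonneg; intro i _
    exact div_nonneg (by positivity) (hlam0 i)
  refine ⟨C, hC0, ?_⟩
  have hρ' : ρ = U * (B'ᴴ * B') * Uᴴ := by
    rw [hB', Matrix.conjTranspose_mul]
    calc ρ = 1 * ρ * 1 := by rw [one_mul, mul_one]
    _ = U * (Uᴴ * ρ * U) * Uᴴ := by rw [← hUU']; noncomm_ring
    _ = U * (Uᴴ * Bᴴ * (B * U)) * Uᴴ := by rw [hB]; noncomm_ring
  have key : ((C : ℂ)) • σ - ρ = U * ((C : ℂ) • D - B'ᴴ * B') * Uᴴ := by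
    rw [Matrix.mul_sub, Matrix.sub_mul, ← hρ', hspec, Matrix.mul_smul, Matrix.smul_mul]
  rw [key]
  apply Matrix.PosSemidef.mul_mul_conjTranspose_same
  refine Matrix.PosSemidef.of_dotProduct_mulVec_nonneg ?_ ?_
  · exact ((psd_real_smul hC0 (Matrix.PosSemidef.diagonal fun i =>
      Complex.zero_le_real.mpr (hlam0 i))).1).sub (Matrix.isHermitian_conjTranspose_mul_self B')
  · intro x
    rw [Matrix.sub_mulVec, dotProduct_sub, sub_nonneg]
    -- LHS as real
    have hL : star x ⬝ᵥ (B'ᴴ * B') *ᵥ x = ((∑ j, ‖(B' *ᵥ x) j‖ ^ 2 : ℝ) : ℂ) := by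
      rw [← Matrix.mulVec_mulVec, Matrix.dotProduct_mulVec, vecMul_conjTranspose, star_star]
      rw [dotProduct]
      push_cast
      congr 1
      ext j
      rw [Pi.star_apply, Complex.star_def, mul_comm, Complex.mul_conj, Complex.normSq_eq_norm_sq]
      push_cast
      ring
    have hR : star x ⬝ᵥ ((C : ℂ) • D) *ᵥ x = ((C * ∑ i, lam i * ‖x i‖ ^ 2 : ℝ) : ℂ) := by
      rw [Matrix.smul_mulVec, dotProduct_smul, smul_eq_mul]
      rw [dotProduct]
      push_cast
      congr 1
      simp only [hD, Matrix.mulVec_diagonal]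
      congr 1
      ext i
      rw [Pi.star_apply, Complex.star_def]
      have h9 : (starRingEnd ℂ) (x i) * ((lam i : ℂ) * x i) =
          (lam i : ℂ) * (x i * (starRingEnd ℂ) (x i)) := by ring
      rw [h9, Complex.mul_conj, Complex.normSq_eq_norm_sq]
      push_cast
      ring
    rw [hL, hR, Complex.real_le_real]
    -- the real inequality
    have hTnn : 0 ≤ ∑ i, lam i * ‖x i‖ ^ 2 :=
      Finset.sum_nonneg fun i _ => mul_nonneg (hlam0 i) (by positivity)
    have hperj : ∀ j, ‖(B' *ᵥ x) j‖ ^ 2 ≤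
        (∑ i ∈ S, ‖B' j i‖ ^ 2 / lam i) * (∑ i, lam i * ‖x i‖ ^ 2) := by
      intro j
      have hrow : (B' *ᵥ x) j = ∑ i ∈ S, B' j i * x i := by
        rw [Matrix.mulVec, dotProduct]
        symm
        apply Finset.sum_subset (Finset.subset_univ S)
        intro i _ hiS
        have : lam i = 0 := by
          by_contra h
          exact hiS (Finset.mem_filter.mpr ⟨Finset.mem_univ i, h⟩)
        rw [hcol i this j, zero_mul]
      have h1 : ‖(B' *ᵥ x) j‖ ≤ ∑ i ∈ S, ‖B' j i‖ * ‖x i‖ := by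
        rw [hrow]
        refine (norm_sum_le _ _).trans ?_
        apply le_of_eq
        congr 1; ext i; exact norm_mul _ _
      have h2 : ‖(B' *ᵥ x) j‖ ^ 2 ≤ (∑ i ∈ S, ‖B' j i‖ * ‖x i‖) ^ 2 :=
        pow_le_pow_left₀ (norm_nonneg _) h1 2
      refine h2.trans ?_
      have hcs : (∑ i ∈ S, (‖B' j i‖ / Real.sqrt (lam i)) * (Real.sqrt (lam i) * ‖x i‖)) ^ 2 ≤
          (∑ i ∈ S, (‖B' j i‖ / Real.sqrt (lam i)) ^ 2) *
          (∑ i ∈ S, (Real.sqrt (lam i) * ‖x i‖) ^ 2) :=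
        Finset.sum_mul_sq_le_sq_mul_sq S _ _
      have he1 : ∀ i ∈ S, (‖B' j i‖ / Real.sqrt (lam i)) * (Real.sqrt (lam i) * ‖x i‖) =
          ‖B' j i‖ * ‖x i‖ := by
        intro i hiS
        have hlne : Real.sqrt (lam i) ≠ 0 := by
          refine Real.sqrt_ne_zero'.mpr ?_
          rcases (Finset.mem_filter.mp hiS).2.lt_or_gt with h | h
          · exact absurd h (not_lt.mpr (hlam0 i))
          · exact h
        field_simp
      have he2 : ∀ i ∈ S, (‖B' j i‖ / Real.sqrt (lam i)) ^ 2 = ‖B' j i‖ ^ 2 / lam i := by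
        intro i hiS
        rw [div_pow, Real.sq_sqrt (hlam0 i)]
      have he3 : ∀ i ∈ S, (Real.sqrt (lam i) * ‖x i‖) ^ 2 = lam i * ‖x i‖ ^ 2 := by
        intro i hiS
        rw [mul_pow, Real.sq_sqrt (hlam0 i)]
      rw [Finset.sum_congr rfl he1, Finset.sum_congr rfl he2, Finset.sum_congr rfl he3] at hcs
      refine hcs.trans ?_
      apply mul_le_mul_of_nonneg_left
      · apply Finset.sum_le_sum_of_subset_of_nonneg (Finset.subset_univ S)
        intro i _ _
        exact mul_nonneg (hlam0 i) (by positivity)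
      · apply Finset.sum_nonneg; intro i _
        exact div_nonneg (by positivity) (hlam0 i)
    calc ∑ j, ‖(B' *ᵥ x) j‖ ^ 2
        ≤ ∑ j, (∑ i ∈ S, ‖B' j i‖ ^ 2 / lam i) * (∑ i, lam i * ‖x i‖ ^ 2) :=
          Finset.sum_le_sum fun j _ => hperj j
      _ = C * ∑ i, lam i * ‖x i‖ ^ 2 := by rw [hC, Finset.sum_mul]

end Main

section Thm
variable {d : Type} [Fintype d] [DecidableEq d]

lemma eq_zero_of_mulVec_eq_zero {A : Matrix d d ℂ} (h : ∀ v, A *ᵥ v = 0) : A = 0 := by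
  ext j i
  have := congrFun (h (Pi.single i 1)) j
  simpa using this

-- The CPTNI property of the map X ↦ (r * X 0 0) • σ, where σ = Aᴴ * A and r = s^2.
lemma cptni_one (σ : Matrix d d ℂ) (A : Matrix d d ℂ) (hA : σ = Aᴴ * A) (s : ℝ) (hs : 0 ≤ s)
    (T : Matrix (Fin 1) (Fin 1) ℂ →ₗ[ℂ] Matrix d d ℂ)
    (hT : ∀ X, T X = (((s^2 : ℝ) : ℂ) * X 0 0) • σ)
    (htr : (s^2 : ℝ) * σ.trace.re ≤ 1) (htrim : σ.trace.im = 0) :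
    ∃ (m : ℕ) (K : Fin m → Matrix d (Fin 1) ℂ),
      (∀ X, T X = ∑ i, K i * X * (K i)ᴴ) ∧
      ((1 : Matrix (Fin 1) (Fin 1) ℂ) - ∑ i, (K i)ᴴ * K i).PosSemidef := by
  classical
  set eqv := (Fintype.equivFin d).symm with heqv
  refine ⟨Fintype.card d, fun i => Matrix.of fun (j : d) (_ : Fin 1) => (s : ℂ) * Aᴴ j (eqv i),
    ?_, ?_⟩
  · intro X
    rw [hT]
    ext j l
    simp only [Matrix.sum_apply, Matrix.mul_apply, Fin.sum_univ_one,
      Matrix.conjTranspose_apply, Matrix.of_apply, Matrix.smul_apply, smul_eq_mul]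
    rw [Equiv.sum_comp eqv
      (fun m => (s : ℂ) * star (A m j) * X 0 0 * star ((s : ℂ) * star (A m l)))]
    rw [hA, Matrix.mul_apply, Finset.mul_sum]
    apply Finset.sum_congr rfl
    intro m _
    have hstar : star ((s : ℂ) * star (A m l)) = (s : ℂ) * A m l := by
      rw [star_mul', star_star, Complex.star_def, Complex.conj_ofReal]
    rw [hstar, Matrix.conjTranspose_apply]
    have hss : (s : ℂ) * (s : ℂ) = ((s^2 : ℝ) : ℂ) := by push_cast; ring
    linear_combination (-(X 0 0 * star (A m j) * A m l)) * hss
  · have hsum : ∑ i, ((Matrix.of fun (j : d) (_ : Fin 1) => (s : ℂ) * Aᴴ j (eqv i))ᴴ *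
        (Matrix.of fun (j : d) (_ : Fin 1) => (s : ℂ) * Aᴴ j (eqv i))) =
        (((s^2 : ℝ) * σ.trace.re : ℝ) : ℂ) • (1 : Matrix (Fin 1) (Fin 1) ℂ) := by
      have htrc : σ.trace = ((σ.trace.re : ℝ) : ℂ) := by
        apply Complex.ext <;> simp [htrim]
      ext a b
      have hab : a = b := Subsingleton.elim a b
      subst hab
      simp only [Matrix.sum_apply, Matrix.mul_apply, Matrix.conjTranspose_apply,
        Matrix.of_apply, Matrix.smul_apply, Matrix.one_apply_eq, smul_eq_mul, mul_one]
      rw [Equiv.sum_comp eqv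
        (fun m => ∑ j, star ((s : ℂ) * star (A m j)) * ((s : ℂ) * star (A m j)))]
      have hthis : ∀ m : d, ∑ j, star ((s : ℂ) * star (A m j)) * ((s : ℂ) * star (A m j)) =
          ((s^2 : ℝ) : ℂ) * ∑ j, A m j * star (A m j) := by
        intro m
        rw [Finset.mul_sum]
        apply Finset.sum_congr rfl
        intro j _
        rw [star_mul', star_star, Complex.star_def, Complex.conj_ofReal]
        push_cast
        ring
      rw [Finset.sum_congr rfl (fun m _ => hthis m), ← Finset.mul_sum]
      have htrace : ∑ m, ∑ j, A m j * star (A m j) = σ.trace := by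
        rw [Finset.sum_comm, hA, Matrix.trace]
        apply Finset.sum_congr rfl
        intro m _
        rw [Matrix.diag_apply, Matrix.mul_apply]
        apply Finset.sum_congr rfl
        intro j _
        rw [Matrix.conjTranspose_apply]
        ring
      rw [htrace, htrc]
      push_cast [Complex.ofReal_re]
      ring
    rw [hsum]
    have h1 : (1 : Matrix (Fin 1) (Fin 1) ℂ) - (((s^2 : ℝ) * σ.trace.re : ℝ) : ℂ) • 1 =
        (((1 - s^2 * σ.trace.re : ℝ)) : ℂ) • (1 : Matrix (Fin 1) (Fin 1) ℂ) := by
      push_cast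
      rw [sub_smul, one_smul]
    rw [h1]
    exact psd_real_smul_one (by linarith)

end Thm

section Thm2
variable {d : Type} [Fintype d] [DecidableEq d]

lemma cptni_two (s : ℝ) (hs : 0 ≤ s)
    (T : Matrix d d ℂ →ₗ[ℂ] Matrix (Fin 1) (Fin 1) ℂ)
    (hT : ∀ X, T X = (((s^2 : ℝ) : ℂ) * X.trace) • 1)
    (hle : s^2 ≤ 1) :
    ∃ (m : ℕ) (K : Fin m → Matrix (Fin 1) d ℂ),
      (∀ X, T X = ∑ i, K i * X * (K i)ᴴ) ∧
      ((1 : Matrix d d ℂ) - ∑ i, (K i)ᴴ * K i).PosSemidef := by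
  classical
  set eqv := (Fintype.equivFin d).symm with heqv
  refine ⟨Fintype.card d,
    fun i => Matrix.of fun (_ : Fin 1) (j : d) => if j = eqv i then (s : ℂ) else 0, ?_, ?_⟩
  · intro X
    rw [hT]
    ext a b
    have hab : a = b := Subsingleton.elim a b
    subst hab
    simp only [Matrix.smul_apply, Matrix.one_apply_eq, smul_eq_mul, mul_one,
      Matrix.sum_apply, Matrix.mul_apply, Matrix.of_apply, Matrix.conjTranspose_apply,
      Fin.sum_univ_one, ite_mul, zero_mul, Finset.sum_ite_eq', Finset.mem_univ, if_true]
    rw [Equiv.sum_comp eqv (fun m => ∑ l, (s : ℂ) * X m l * star (if l = m then (s:ℂ) else 0))]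
    have hper : ∀ m : d, ∑ l, (s : ℂ) * X m l * star (if l = m then (s:ℂ) else 0) =
        ((s^2 : ℝ) : ℂ) * X m m := by
      intro m
      have : ∀ l, (s : ℂ) * X m l * star (if l = m then (s:ℂ) else 0) =
          if l = m then ((s : ℂ) * X m l * star (s : ℂ)) else 0 := by
        intro l
        by_cases hl : l = m <;> simp [hl]
      rw [Finset.sum_congr rfl fun l _ => this l, Finset.sum_ite_eq' Finset.univ m
        (fun l => (s : ℂ) * X m l * star (s : ℂ))]
      simp only [Finset.mem_univ, if_true, Complex.star_def, Complex.conj_ofReal]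
      push_cast
      ring
    rw [Finset.sum_congr rfl fun m _ => hper m, Matrix.trace, Finset.mul_sum]
    rfl
  · have hsum : (∑ i, ((fun i => Matrix.of fun (_ : Fin 1) (j : d) =>
        if j = eqv i then (s : ℂ) else 0) i)ᴴ * ((fun i => Matrix.of fun (_ : Fin 1) (j : d) =>
        if j = eqv i then (s : ℂ) else 0) i)) = (((s^2 : ℝ)) : ℂ) • (1 : Matrix d d ℂ) := by
      ext j l
      simp only [Matrix.sum_apply, Matrix.mul_apply, Matrix.of_apply,
        Matrix.conjTranspose_apply, Fin.sum_univ_one, Matrix.smul_apply, smul_eq_mul]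
      rw [Equiv.sum_comp eqv
        (fun m => star (if j = m then (s:ℂ) else 0) * (if l = m then (s:ℂ) else 0))]
      by_cases hjl : j = l
      · subst hjl
        rw [Finset.sum_eq_single j]
        · simp [Complex.conj_ofReal, Matrix.one_apply_eq]
          push_cast
          ring
        · intro b _ hb
          simp [Ne.symm hb]
        · intro h
          exact absurd (Finset.mem_univ j) h
      · rw [Finset.sum_eq_zero, Matrix.one_apply_ne hjl, mul_zero]
        intro m _
        by_cases hj : j = m
        · subst hj
          have hlj : ¬ l = j := fun h => hjl h.symm
          simp [hlj]
        · simp [hj]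
    rw [hsum]
    have h1 : (1 : Matrix d d ℂ) - (((s^2 : ℝ)) : ℂ) • 1 =
        (((1 - s^2 : ℝ)) : ℂ) • (1 : Matrix d d ℂ) := by
      push_cast
      rw [sub_smul, one_smul]
    rw [h1]
    exact psd_real_smul_one (by linarith)

end Thm2


/-- The dichotomy `u = (3,2)` on `ℂ` is power universal: for every dichotomy `(ρ,σ)` with
`ρ ≠ 0` there is `k` such that `(3^k, 2^k) ≽ (ρ,σ)` and `(3^k ρ, 2^k σ) ≽ (1,1)` in the
dichotomy preorder (scalars on `ℂ` are identified with `1 × 1` matrices). -/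
theorem power_universal_three_two {d : Type} [Fintype d] [DecidableEq d]
    (ρ σ : Matrix d d ℂ)
    (hρ : ρ.PosSemidef) (hσ : σ.PosSemidef) (hsupp : SuppLE ρ σ) (hρne : ρ ≠ 0) :
    ∃ k : ℕ,
      (∃ T₁ : Matrix (Fin 1) (Fin 1) ℂ →ₗ[ℂ] Matrix d d ℂ,
        IsCPTNI T₁ ∧
        (T₁ (((3 : ℂ) ^ k) • 1) - ρ).PosSemidef ∧
        T₁ (((2 : ℂ) ^ k) • 1) = σ) ∧
      (∃ T₂ : Matrix d d ℂ →ₗ[ℂ] Matrix (Fin 1) (Fin 1) ℂ,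
        IsCPTNI T₂ ∧
        (T₂ (((3 : ℂ) ^ k) • ρ) - 1).PosSemidef ∧
        T₂ (((2 : ℂ) ^ k) • σ) = 1) := by
  unfold IsCPTNI SuppLE at *

  classical
  obtain ⟨C, hC0, hCσ⟩ := exists_smul_sub_posSemidef ρ σ hρ hσ hsupp
  have hσne : σ ≠ 0 := by
    intro h0
    apply hρne
    apply _root_.eq_zero_of_mulVec_eq_zero
    intro v
    apply hsupp
    rw [h0, Matrix.zero_mulVec]
  obtain ⟨hrρpos, hiρ⟩ := trace_pos_of_psd_ne_zero hρ hρne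
  obtain ⟨hrσpos, hiσ⟩ := trace_pos_of_psd_ne_zero hσ hσne
  set rρ : ℝ := ρ.trace.re with hrρ
  set rσ : ℝ := σ.trace.re with hrσ
  have htrρ : ρ.trace = (rρ : ℂ) := by apply Complex.ext <;> simp [hiρ, hrρ]
  have htrσ : σ.trace = (rσ : ℂ) := by apply Complex.ext <;> simp [hiσ, hrσ]
  obtain ⟨k, hk⟩ := pow_unbounded_of_one_lt (max C (max rσ (max (rσ / rρ) rσ⁻¹)))
    (by norm_num : (1 : ℝ) < 3 / 2)
  have h2kpos : (0 : ℝ) < 2 ^ k := by positivity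
  have h32k : ((3 : ℝ) / 2) ^ k ≤ 2 ^ k :=
    pow_le_pow_left₀ (by norm_num) (by norm_num) k
  have hk1 : C ≤ (3 / 2 : ℝ) ^ k := ((le_max_left _ _).trans_lt hk).le
  have hk2 : rσ ≤ 2 ^ k :=
    (((le_max_left _ _).trans (le_max_right _ _)).trans_lt hk).le.trans h32k
  have hk3 : rσ / rρ ≤ (3 / 2 : ℝ) ^ k :=
    (((le_max_left _ _).trans (le_max_right _ _)).trans
      (le_max_right _ _)).trans_lt hk |>.le
  have hk4 : rσ⁻¹ ≤ 2 ^ k :=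
    ((((le_max_right _ _).trans (le_max_right _ _)).trans
      (le_max_right _ _)).trans_lt hk).le.trans h32k
  set r₁ : ℝ := (2⁻¹ : ℝ) ^ k with hr₁
  have hr₁pos : 0 < r₁ := by positivity
  have he : r₁ * 2 ^ k = 1 := by rw [hr₁, ← mul_pow]; norm_num
  have hr₁σ : r₁ ≤ rσ := by
    calc r₁ = r₁ * 1 := (mul_one r₁).symm
    _ ≤ r₁ * (2 ^ k * rσ) := by
        apply mul_le_mul_of_nonneg_left _ hr₁pos.le
        calc (1 : ℝ) = rσ⁻¹ * rσ := (inv_mul_cancel₀ hrσpos.ne').symm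
        _ ≤ 2 ^ k * rσ := mul_le_mul_of_nonneg_right hk4 hrσpos.le
    _ = rσ := by rw [← mul_assoc, he, one_mul]
  set s₁ : ℝ := Real.sqrt r₁ with hs₁def
  have hs₁ : s₁ ^ 2 = r₁ := Real.sq_sqrt hr₁pos.le
  refine ⟨k, ?_, ?_⟩
  · -- T₁
    obtain ⟨A, hA⟩ := psd_eq_conjTranspose_mul_self hσ
    refine ⟨{ toFun := fun X => ((r₁ : ℂ) * X 0 0) • σ,
              map_add' := fun X Y => by
                simp only [Matrix.add_apply, mul_add, add_smul]
              map_smul' := fun c X => by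
                simp only [Matrix.smul_apply, smul_eq_mul, RingHom.id_apply, smul_smul]
                congr 1
                ring }, ?_, ?_, ?_⟩
    · refine cptni_one σ A hA s₁ (Real.sqrt_nonneg _) _ (fun X => by rw [hs₁]; rfl) ?_ hiσ
      rw [hs₁, ← hrσ]
      calc r₁ * rσ ≤ r₁ * 2 ^ k := mul_le_mul_of_nonneg_left hk2 hr₁pos.le
      _ = 1 := he
    · show (((r₁ : ℂ) * (((3 : ℂ) ^ k • (1 : Matrix (Fin 1) (Fin 1) ℂ)) 0 0)) • σ - ρ).PosSemidef
      have hX : ((3 : ℂ) ^ k • (1 : Matrix (Fin 1) (Fin 1) ℂ)) 0 0 = (3 : ℂ) ^ k := by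
        simp [Matrix.smul_apply, Matrix.one_apply_eq]
      rw [hX]
      have hco : (r₁ : ℂ) * (3 : ℂ) ^ k = (((3 / 2 : ℝ) ^ k : ℝ) : ℂ) := by
        rw [hr₁]
        push_cast
        rw [← mul_pow]
        norm_num
      rw [hco]
      have hsplit : ((((3 / 2 : ℝ) ^ k : ℝ) : ℂ)) • σ - ρ =
          (((C : ℝ) : ℂ) • σ - ρ) + ((((3 / 2 : ℝ) ^ k - C : ℝ)) : ℂ) • σ := by
        push_cast
        module
      rw [hsplit]
      exact hCσ.add (psd_real_smul (by linarith) hσ)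
    · show ((r₁ : ℂ) * (((2 : ℂ) ^ k • (1 : Matrix (Fin 1) (Fin 1) ℂ)) 0 0)) • σ = σ
      have hX : ((2 : ℂ) ^ k • (1 : Matrix (Fin 1) (Fin 1) ℂ)) 0 0 = (2 : ℂ) ^ k := by
        simp [Matrix.smul_apply, Matrix.one_apply_eq]
      rw [hX]
      have hco : (r₁ : ℂ) * (2 : ℂ) ^ k = 1 := by
        rw [hr₁]
        push_cast
        rw [← mul_pow]
        norm_num
      rw [hco, one_smul]
  · -- T₂
    set r₂ : ℝ := r₁ / rσ with hr₂
    have hr₂pos : 0 < r₂ := div_pos hr₁pos hrσpos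
    have hr₂le : r₂ ≤ 1 := by
      rw [hr₂, div_le_one hrσpos]
      exact hr₁σ
    set s₂ : ℝ := Real.sqrt r₂ with hs₂def
    have hs₂ : s₂ ^ 2 = r₂ := Real.sq_sqrt hr₂pos.le
    refine ⟨{ toFun := fun X => ((r₂ : ℂ) * X.trace) • 1,
              map_add' := fun X Y => by
                simp only [Matrix.trace_add, mul_add, add_smul]
              map_smul' := fun c X => by
                simp only [Matrix.trace_smul, smul_eq_mul, RingHom.id_apply, smul_smul]
                congr 1
                ring }, ?_, ?_, ?_⟩
    · exact cptni_two s₂ (Real.sqrt_nonneg _) _ (fun X => by rw [hs₂]; rfl) (by rw [hs₂]; exact hr₂le)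
    · show (((r₂ : ℂ) * ((3 : ℂ) ^ k • ρ).trace) • (1 : Matrix (Fin 1) (Fin 1) ℂ) - 1).PosSemidef
      rw [Matrix.trace_smul, htrρ]
      have hw : (r₂ : ℂ) * ((3 : ℂ) ^ k • (rρ : ℂ)) = ((r₂ * 3 ^ k * rρ : ℝ) : ℂ) := by
        push_cast
        rw [smul_eq_mul]
        ring
      rw [hw]
      have h1 : ((r₂ * 3 ^ k * rρ : ℝ) : ℂ) • (1 : Matrix (Fin 1) (Fin 1) ℂ) - 1 =
          (((r₂ * 3 ^ k * rρ - 1 : ℝ)) : ℂ) • 1 := by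
        push_cast
        rw [sub_smul, one_smul]
      rw [h1]
      apply psd_real_smul_one
      have h35 : rσ ≤ (3 / 2 : ℝ) ^ k * rρ := (div_le_iff₀ hrρpos).mp hk3
      have hwge : 1 ≤ r₂ * 3 ^ k * rρ := by
        rw [hr₂, hr₁]
        rw [div_mul_eq_mul_div, div_mul_eq_mul_div, le_div_iff₀ hrσpos, one_mul]
        calc rσ ≤ (3 / 2 : ℝ) ^ k * rρ := h35
        _ = (2 : ℝ)⁻¹ ^ k * 3 ^ k * rρ := by
            rw [← mul_pow]
            norm_num
      linarith
    · show ((r₂ : ℂ) * ((2 : ℂ) ^ k • σ).trace) • (1 : Matrix (Fin 1) (Fin 1) ℂ) = 1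
      rw [Matrix.trace_smul, htrσ]
      have hw : (r₂ : ℂ) * ((2 : ℂ) ^ k • (rσ : ℂ)) = 1 := by
        rw [smul_eq_mul, hr₂, hr₁]
        push_cast
        field_simp
        rw [← mul_pow]; norm_num
      rw [hw, one_smul]
end

section
/- For positive semidefinite operators ρ, σ on a finite-dimensional Hilbert space with supp ρ ⊆ supp σ, and α ≥ 1, the sandwiched quasi-entropy Q̃_α(ρ,σ) = Tr( σ^{(1−α)/(2α)} ρ σ^{(1−α)/(2α)} )^α satisfies Q̃_α(𝒫_σ(ρ), σ) ≤ Q̃_α(ρ, σ), where 𝒫_σ is the pinching map with respect to σ. -/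
open Matrix Finset
open scoped Kronecker ComplexOrder

/-- The orthogonal projection onto the eigenspace of `A` for the eigenvalue `μ`, as a matrix. -/
noncomputable def eigProj {ι : Type} [Fintype ι] [DecidableEq ι]
    (A : Matrix ι ι ℂ) (μ : ℂ) : Matrix ι ι ℂ :=
  let K := LinearMap.ker (Matrix.toEuclideanLin A - μ • LinearMap.id)
  Matrix.toEuclideanLin.symm (K.subtype ∘ₗ (K.orthogonalProjection).toLinearMap)

open scoped Classical in
/-- The pinching map `𝒫_A(X) = ∑_{μ ∈ spec A} P_μ X P_μ`, where the sum runs over the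
(distinct) eigenvalues of `A`, i.e. the roots of its characteristic polynomial. -/
noncomputable def pinching {ι : Type} [Fintype ι] [DecidableEq ι]
    (A X : Matrix ι ι ℂ) : Matrix ι ι ℂ :=
  ∑ μ ∈ A.charpoly.roots.toFinset, eigProj A μ * X * eigProj A μ

open scoped Classical in
/-- `M^c` for a positive semidefinite matrix `M` and real exponent `c`, via functional
calculus on the support of `M` (eigenvalue `0` is sent to `0`). -/
noncomputable def psdRpow {ι : Type} [Fintype ι] [DecidableEq ι]
    (M : Matrix ι ι ℂ) (c : ℝ) : Matrix ι ι ℂ :=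
  ∑ μ ∈ M.charpoly.roots.toFinset,
    (if 0 < μ.re then ((μ.re ^ c : ℝ) : ℂ) else 0) • eigProj M μ

/-- The sandwiched Rényi quasi-entropy
`Q̃_α(ρ,σ) = Tr (σ^{(1-α)/(2α)} ρ σ^{(1-α)/(2α)})^α`. -/
noncomputable def sandwichedQ {ι : Type} [Fintype ι] [DecidableEq ι]
    (α : ℝ) (ρ σ : Matrix ι ι ℂ) : ℝ :=
  traceRpow (psdRpow σ ((1 - α) / (2 * α)) * ρ * psdRpow σ ((1 - α) / (2 * α))) α

section Aux
open scoped Classical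

variable {ι : Type} [Fintype ι] [DecidableEq ι] (σ : Matrix ι ι ℂ)

namespace SandAux

noncomputable def Esp (μ : ℂ) : Submodule ℂ (EuclideanSpace ℂ ι) :=
  LinearMap.ker (Matrix.toEuclideanLin σ - μ • LinearMap.id)

noncomputable def Pj (μ : ℂ) : EuclideanSpace ℂ ι →ₗ[ℂ] EuclideanSpace ℂ ι :=
  (Esp σ μ).subtype ∘ₗ (Submodule.orthogonalProjection (Esp σ μ)).toLinearMap

lemma eigProj_eq (μ : ℂ) : eigProj σ μ = Matrix.toEuclideanLin.symm (Pj σ μ) := rfl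

lemma toEuclideanLin_eigProj (μ : ℂ) : Matrix.toEuclideanLin (eigProj σ μ) = Pj σ μ := by
  rw [eigProj_eq, LinearEquiv.apply_symm_apply]

lemma Esp_eq (μ : ℂ) : Esp σ μ = Module.End.eigenspace (Matrix.toEuclideanLin σ) μ := by
  rw [Module.End.eigenspace_def]
  rfl

lemma toEuclideanLin_mul (A B : Matrix ι ι ℂ) :
    Matrix.toEuclideanLin (A * B) = (Matrix.toEuclideanLin A) ∘ₗ (Matrix.toEuclideanLin B) := by
  rw [Matrix.toEuclideanLin_eq_toLin,
    Matrix.toLin_mul (PiLp.basisFun 2 ℂ ι) (PiLp.basisFun 2 ℂ ι) (PiLp.basisFun 2 ℂ ι)]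

lemma Pj_apply_mem (μ : ℂ) (x : EuclideanSpace ℂ ι) : Pj σ μ x ∈ Esp σ μ := by
  exact ((Submodule.orthogonalProjection (Esp σ μ)) x).2

lemma Pj_apply_of_mem {μ : ℂ} {x : EuclideanSpace ℂ ι} (hx : x ∈ Esp σ μ) : Pj σ μ x = x :=
  (Submodule.starProjection_eq_self_iff (K := Esp σ μ)).mpr hx

variable {σ}

lemma Pj_apply_of_mem_ne (hσ : σ.IsHermitian) {μ ν : ℂ} (hne : μ ≠ ν) {x : EuclideanSpace ℂ ι}
    (hx : x ∈ Esp σ ν) : Pj σ μ x = 0 := by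
  have hT : (Matrix.toEuclideanLin σ).IsSymmetric :=
    Matrix.isHermitian_iff_isSymmetric.mp hσ
  have hfam := hT.orthogonalFamily_eigenspaces
  have hxorth : x ∈ (Esp σ μ)ᗮ := by
    intro u hu
    rw [Esp_eq] at hu hx
    exact hfam hne ⟨u, hu⟩ ⟨x, hx⟩
  have : Submodule.orthogonalProjection (Esp σ μ) x = 0 :=
    Submodule.orthogonalProjectionOnto_apply_of_mem_orthogonal hxorth
  simp [Pj, this]

lemma eigProj_mul (hσ : σ.IsHermitian) (μ ν : ℂ) :
    eigProj σ μ * eigProj σ ν = if μ = ν then eigProj σ μ else 0 := by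
  apply Matrix.toEuclideanLin.injective
  rw [toEuclideanLin_mul, toEuclideanLin_eigProj, toEuclideanLin_eigProj]
  split_ifs with h
  · subst h
    rw [toEuclideanLin_eigProj]
    refine LinearMap.ext fun x => ?_
    exact Pj_apply_of_mem σ (Pj_apply_mem σ μ x)
  · rw [map_zero]
    refine LinearMap.ext fun x => ?_
    exact Pj_apply_of_mem_ne hσ h (Pj_apply_mem σ ν x)

lemma eigProj_conjTranspose (μ : ℂ) : (eigProj σ μ)ᴴ = eigProj σ μ := by
  apply Matrix.toEuclideanLin.injective
  rw [Matrix.toEuclideanLin_conjTranspose_eq_adjoint, toEuclideanLin_eigProj]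
  symm
  rw [LinearMap.eq_adjoint_iff]
  intro x y
  exact Submodule.inner_starProjection_left_eq_right (Esp σ μ) x y

lemma isRoot_charpoly_of_eig {μ : ℂ} {x : EuclideanSpace ℂ ι} (hx : x ∈ Esp σ μ) (hx0 : x ≠ 0) :
    μ ∈ σ.charpoly.roots.toFinset := by
  rw [Multiset.mem_toFinset, Polynomial.mem_roots σ.charpoly_monic.ne_zero]
  -- charpoly eval μ = det (μ • 1 - σ)
  have hdet : σ.charpoly.eval μ = (μ • (1 : Matrix ι ι ℂ) - σ).det := by
    rw [Matrix.charpoly, eval_det]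
    congr 1
    ext i j
    rw [matPolyEquiv_eval]
    simp [Matrix.charmatrix_apply, Matrix.one_apply, Matrix.diagonal_apply, mul_comm,
      Matrix.smul_apply, smul_eq_mul, apply_ite (Polynomial.eval μ)]
  rw [Polynomial.IsRoot, hdet]
  rw [← Matrix.exists_mulVec_eq_zero_iff]
  refine ⟨(WithLp.equiv 2 (ι → ℂ)) x, by simpa using hx0, ?_⟩
  have hker : Matrix.toEuclideanLin σ x - μ • x = 0 := by
    simpa [Esp, LinearMap.mem_ker, LinearMap.sub_apply] using hx
  have : σ *ᵥ (WithLp.equiv 2 (ι → ℂ)) x = μ • (WithLp.equiv 2 (ι → ℂ)) x := by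
    have := congrArg (WithLp.equiv 2 (ι → ℂ)) (sub_eq_zero.mp hker)
    simpa [Matrix.ofLp_toEuclideanLin_apply] using this
  rw [Matrix.sub_mulVec, Matrix.smul_mulVec, Matrix.one_mulVec, this, sub_self]

lemma sum_eigProj (hσ : σ.IsHermitian) :
    ∑ μ ∈ σ.charpoly.roots.toFinset, eigProj σ μ = 1 := by
  apply Matrix.toEuclideanLin.injective
  rw [map_sum]
  have h1 : Matrix.toEuclideanLin (1 : Matrix ι ι ℂ) = LinearMap.id := by
    rw [Matrix.toEuclideanLin_eq_toLin, Matrix.toLin_one]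
  rw [h1]
  have hrw : ∀ μ ∈ σ.charpoly.roots.toFinset,
      Matrix.toEuclideanLin (eigProj σ μ) = Pj σ μ := fun μ _ => toEuclideanLin_eigProj σ μ
  rw [Finset.sum_congr rfl hrw]
  have hT : (Matrix.toEuclideanLin σ).IsSymmetric :=
    Matrix.isHermitian_iff_isSymmetric.mp hσ
  refine LinearMap.ext fun x => ?_
  rw [LinearMap.sum_apply, LinearMap.id_apply]
  have hx : x ∈ ⨆ μ : ℂ, Module.End.eigenspace (Matrix.toEuclideanLin σ) μ := by
    rw [← Submodule.orthogonal_orthogonal (⨆ μ : ℂ, Module.End.eigenspace _ μ),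
      hT.orthogonalComplement_iSup_eigenspaces_eq_bot, Submodule.bot_orthogonal_eq_top]
    trivial
  refine Submodule.iSup_induction (x := x)
    (motive := fun v => ∑ μ ∈ σ.charpoly.roots.toFinset, Pj σ μ v = v) _ hx ?_ ?_ ?_
  · intro ν y hy
    rw [← Esp_eq] at hy
    by_cases hy0 : y = 0
    · simp [hy0]
    · have hν : ν ∈ σ.charpoly.roots.toFinset := isRoot_charpoly_of_eig hy hy0
      rw [Finset.sum_eq_single_of_mem ν hν]
      · exact Pj_apply_of_mem σ hy
      · intro μ _ hμν
        exact Pj_apply_of_mem_ne hσ hμν hy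
  · simp
  · intro y z hy hz
    have h' : ∀ μ, Pj σ μ (y + z) = Pj σ μ y + Pj σ μ z := fun μ => map_add _ _ _
    simp only [h', Finset.sum_add_distrib, hy, hz]

end SandAux
end Aux


section Aux2
open scoped Classical

namespace SandAux

variable {ι : Type} [Fintype ι] [DecidableEq ι] {σ : Matrix ι ι ℂ}

lemma psdRpow_mul_eigProj (hσ : σ.IsHermitian) (c : ℝ) {ν : ℂ}
    (hν : ν ∈ σ.charpoly.roots.toFinset) :
    psdRpow σ c * eigProj σ ν
      = (if 0 < ν.re then ((ν.re ^ c : ℝ) : ℂ) else 0) • eigProj σ ν := by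
  rw [psdRpow, Finset.sum_mul]
  rw [Finset.sum_eq_single_of_mem ν hν]
  · rw [smul_mul_assoc, eigProj_mul hσ, if_pos rfl]
  · intro μ _ hμν
    rw [smul_mul_assoc, eigProj_mul hσ, if_neg hμν, smul_zero]

lemma eigProj_mul_psdRpow (hσ : σ.IsHermitian) (c : ℝ) {ν : ℂ}
    (hν : ν ∈ σ.charpoly.roots.toFinset) :
    eigProj σ ν * psdRpow σ c
      = (if 0 < ν.re then ((ν.re ^ c : ℝ) : ℂ) else 0) • eigProj σ ν := by
  rw [psdRpow, Finset.mul_sum]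
  rw [Finset.sum_eq_single_of_mem ν hν]
  · rw [mul_smul_comm, eigProj_mul hσ, if_pos rfl]
  · intro μ _ hμν
    rw [mul_smul_comm, eigProj_mul hσ, if_neg (Ne.symm hμν), smul_zero]

lemma psdRpow_pinching (hσ : σ.IsHermitian) (c : ℝ) (ρ : Matrix ι ι ℂ) :
    psdRpow σ c * pinching σ ρ * psdRpow σ c
      = pinching σ (psdRpow σ c * ρ * psdRpow σ c) := by
  rw [pinching, pinching, Finset.mul_sum, Finset.sum_mul]
  refine Finset.sum_congr rfl fun ν hν => ?_
  have h1 := psdRpow_mul_eigProj hσ c hν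
  have h2 := eigProj_mul_psdRpow hσ c hν
  calc psdRpow σ c * (eigProj σ ν * ρ * eigProj σ ν) * psdRpow σ c
      = (psdRpow σ c * eigProj σ ν) * ρ * (eigProj σ ν * psdRpow σ c) := by
        simp only [mul_assoc]
    _ = eigProj σ ν * (psdRpow σ c * ρ * psdRpow σ c) * eigProj σ ν := by
        rw [h1, h2]
        rw [show eigProj σ ν * (psdRpow σ c * ρ * psdRpow σ c) * eigProj σ ν
            = (eigProj σ ν * psdRpow σ c) * ρ * (psdRpow σ c * eigProj σ ν) by
          simp only [mul_assoc]]
        rw [h1, h2]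

lemma psdRpow_isHermitian (c : ℝ) : (psdRpow σ c).IsHermitian := by
  rw [Matrix.IsHermitian, psdRpow, Matrix.conjTranspose_sum]
  refine Finset.sum_congr rfl fun μ _ => ?_
  rw [Matrix.conjTranspose_smul, eigProj_conjTranspose]
  congr 1
  split_ifs <;> simp

lemma pinching_isHermitian {M : Matrix ι ι ℂ} (σ : Matrix ι ι ℂ) (hM : M.IsHermitian) :
    (pinching σ M).IsHermitian := by
  rw [Matrix.IsHermitian, pinching, Matrix.conjTranspose_sum]
  refine Finset.sum_congr rfl fun μ _ => ?_
  rw [Matrix.conjTranspose_mul, Matrix.conjTranspose_mul, eigProj_conjTranspose, hM.eq,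
    mul_assoc]

end SandAux
end Aux2

section Aux3
open scoped Classical

namespace SandAux

variable {ι : Type} [Fintype ι] [DecidableEq ι] {σ : Matrix ι ι ℂ}

lemma traceRpow_pinching_le (hσ : σ.IsHermitian) {M : Matrix ι ι ℂ} (hM : M.PosSemidef)
    {α : ℝ} (hα : 1 ≤ α) : traceRpow (pinching σ M) α ≤ traceRpow M α := by
  have hMh : M.IsHermitian := hM.1
  have hN : (pinching σ M).IsHermitian := pinching_isHermitian σ hMh
  rw [traceRpow, dif_pos hN, traceRpow, dif_pos hMh]
  set R := σ.charpoly.roots.toFinset with hR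
  set U : Matrix ι ι ℂ := ↑(hN.eigenvectorUnitary) with hUdef
  set V : Matrix ι ι ℂ := ↑(hMh.eigenvectorUnitary) with hVdef
  have hUU : Uᴴ * U = 1 := by
    rw [← Matrix.star_eq_conjTranspose]
    exact Matrix.mem_unitaryGroup_iff'.mp hN.eigenvectorUnitary.2
  have hVV : Vᴴ * V = 1 := by
    rw [← Matrix.star_eq_conjTranspose]
    exact Matrix.mem_unitaryGroup_iff'.mp hMh.eigenvectorUnitary.2
  have hVV' : V * Vᴴ = 1 := by
    rw [← Matrix.star_eq_conjTranspose]
    exact Matrix.mem_unitaryGroup_iff.mp hMh.eigenvectorUnitary.2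
  have hUU' : U * Uᴴ = 1 := by
    rw [← Matrix.star_eq_conjTranspose]
    exact Matrix.mem_unitaryGroup_iff.mp hN.eigenvectorUnitary.2
  set D : Matrix ι ι ℂ := Matrix.diagonal (Complex.ofReal ∘ hMh.eigenvalues) with hDdef
  have hMspec : M = V * D * Vᴴ := by
    rw [← Matrix.star_eq_conjTranspose]
    exact hMh.spectral_theorem
  set A : ℂ → Matrix ι ι ℂ := fun μ => Uᴴ * eigProj σ μ * V with hAdef
  have hAH : ∀ μ, (A μ)ᴴ = Vᴴ * eigProj σ μ * U := by
    intro μ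
    rw [hAdef]
    simp only [Matrix.conjTranspose_mul, Matrix.conjTranspose_conjTranspose,
      eigProj_conjTranspose, mul_assoc]
  set c : ℂ → ι → ι → ℝ := fun μ i j => Complex.normSq (A μ i j) with hcdef
  have hcnn : ∀ μ i j, 0 ≤ c μ i j := fun μ i j => Complex.normSq_nonneg _
  -- diagonal entries of pinched matrix in its eigenbasis
  have hdiagN : ∀ i, ((hN.eigenvalues i : ℝ) : ℂ) = (Uᴴ * pinching σ M * U) i i := by
    intro i
    have hd := hN.conjStarAlgAut_star_eigenvectorUnitary
    rw [Unitary.conjStarAlgAut_star_apply] at hd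
    rw [hUdef, ← Matrix.star_eq_conjTranspose, hd]
    simp [Matrix.diagonal_apply_eq, Function.comp]
  have hAA : ∀ μ, Uᴴ * (eigProj σ μ * M * eigProj σ μ) * U = A μ * D * (A μ)ᴴ := by
    intro μ
    rw [hMspec, hAdef, hAH]
    simp only [mul_assoc]
  have hentry : ∀ μ i, (A μ * D * (A μ)ᴴ) i i
      = ∑ j, ((c μ i j : ℝ) : ℂ) * ((hMh.eigenvalues j : ℝ) : ℂ) := by
    intro μ i
    rw [Matrix.mul_apply]
    refine Finset.sum_congr rfl fun j _ => ?_
    rw [Matrix.mul_diagonal, Matrix.conjTranspose_apply, mul_right_comm]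
    congr 1
    exact Complex.mul_conj _
  have hNrepr : ∀ i, hN.eigenvalues i = ∑ μ ∈ R, ∑ j, c μ i j * hMh.eigenvalues j := by
    intro i
    have h1 : ((hN.eigenvalues i : ℝ) : ℂ)
        = ∑ μ ∈ R, ∑ j, ((c μ i j : ℝ) : ℂ) * ((hMh.eigenvalues j : ℝ) : ℂ) := by
      rw [hdiagN i, pinching, Finset.mul_sum, Finset.sum_mul, Matrix.sum_apply]
      exact Finset.sum_congr rfl fun μ hμ => by rw [hAA μ, hentry μ i]
    apply Complex.ofReal_injective
    push_cast
    push_cast at h1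
    exact h1
  have hAmulAH : ∀ μ, A μ * (A μ)ᴴ = Uᴴ * eigProj σ μ * U := by
    intro μ
    rw [hAH, hAdef]
    have hstep : V * (Vᴴ * (eigProj σ μ * U)) = eigProj σ μ * U := by
      rw [← mul_assoc, hVV', one_mul]
    calc (Uᴴ * eigProj σ μ * V) * (Vᴴ * eigProj σ μ * U)
        = Uᴴ * (eigProj σ μ * (V * (Vᴴ * (eigProj σ μ * U)))) := by simp only [mul_assoc]
      _ = Uᴴ * (eigProj σ μ * (eigProj σ μ * U)) := by rw [hstep]
      _ = Uᴴ * ((eigProj σ μ * eigProj σ μ) * U) := by simp only [mul_assoc]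
      _ = Uᴴ * (eigProj σ μ * U) := by rw [eigProj_mul hσ, if_pos rfl]
      _ = Uᴴ * eigProj σ μ * U := by simp only [mul_assoc]
  have hAHmulA : ∀ μ, (A μ)ᴴ * A μ = Vᴴ * eigProj σ μ * V := by
    intro μ
    rw [hAH, hAdef]
    have hstep : U * (Uᴴ * (eigProj σ μ * V)) = eigProj σ μ * V := by
      rw [← mul_assoc, hUU', one_mul]
    calc (Vᴴ * eigProj σ μ * U) * (Uᴴ * eigProj σ μ * V)
        = Vᴴ * (eigProj σ μ * (U * (Uᴴ * (eigProj σ μ * V)))) := by simp only [mul_assoc]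
      _ = Vᴴ * (eigProj σ μ * (eigProj σ μ * V)) := by rw [hstep]
      _ = Vᴴ * ((eigProj σ μ * eigProj σ μ) * V) := by simp only [mul_assoc]
      _ = Vᴴ * (eigProj σ μ * V) := by rw [eigProj_mul hσ, if_pos rfl]
      _ = Vᴴ * eigProj σ μ * V := by simp only [mul_assoc]
  have hrow : ∀ i, ∑ μ ∈ R, ∑ j, c μ i j = 1 := by
    intro i
    have hsumA : ∑ μ ∈ R, A μ * (A μ)ᴴ = 1 := by
      rw [Finset.sum_congr rfl fun μ _ => hAmulAH μ, ← Finset.sum_mul, ← Finset.mul_sum, hR,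
        sum_eigProj hσ, mul_one, hUU]
    have h3 : ((∑ μ ∈ R, ∑ j, c μ i j : ℝ) : ℂ) = 1 := by
      push_cast
      have h4 : ∀ μ ∈ R, ∑ j, ((c μ i j : ℝ) : ℂ) = (A μ * (A μ)ᴴ) i i := by
        intro μ _
        rw [Matrix.mul_apply]
        refine Finset.sum_congr rfl fun j _ => ?_
        rw [Matrix.conjTranspose_apply]
        exact (Complex.mul_conj _).symm
      rw [Finset.sum_congr rfl h4, ← Matrix.sum_apply, hsumA, Matrix.one_apply_eq]
    exact_mod_cast h3
  have hcol : ∀ j, ∑ μ ∈ R, ∑ i, c μ i j = 1 := by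
    intro j
    have hsumA : ∑ μ ∈ R, (A μ)ᴴ * A μ = 1 := by
      rw [Finset.sum_congr rfl fun μ _ => hAHmulA μ, ← Finset.sum_mul, ← Finset.mul_sum, hR,
        sum_eigProj hσ, mul_one, hVV]
    have h3 : ((∑ μ ∈ R, ∑ i, c μ i j : ℝ) : ℂ) = 1 := by
      push_cast
      have h4 : ∀ μ ∈ R, ∑ i, ((c μ i j : ℝ) : ℂ) = ((A μ)ᴴ * A μ) j j := by
        intro μ _
        rw [Matrix.mul_apply]
        refine Finset.sum_congr rfl fun i _ => ?_
        rw [Matrix.conjTranspose_apply, mul_comm]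
        exact (Complex.mul_conj _).symm
      rw [Finset.sum_congr rfl h4, ← Matrix.sum_apply, hsumA, Matrix.one_apply_eq]
    exact_mod_cast h3
  have hjensen : ∀ i, hN.eigenvalues i ^ α
      ≤ ∑ μ ∈ R, ∑ j, c μ i j * hMh.eigenvalues j ^ α := by
    intro i
    have hconv : ConvexOn ℝ (Set.Ici 0) fun x : ℝ => x ^ α := convexOn_rpow hα
    have key := hconv.map_sum_le (t := R ×ˢ (Finset.univ : Finset ι))
      (w := fun p => c p.1 i p.2) (p := fun p => hMh.eigenvalues p.2)
      (fun p _ => hcnn _ _ _)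
      (by rw [Finset.sum_product]; exact hrow i)
      (fun p _ => hM.eigenvalues_nonneg p.2)
    rw [Finset.sum_product] at key
    simp only [smul_eq_mul] at key
    calc hN.eigenvalues i ^ α
        = (∑ μ ∈ R, ∑ j, c μ i j * hMh.eigenvalues j) ^ α := by rw [hNrepr i]
      _ ≤ ∑ μ ∈ R, ∑ j, c μ i j * hMh.eigenvalues j ^ α := by
          have := key
          rwa [Finset.sum_product] at this
  calc ∑ i, hN.eigenvalues i ^ α
      ≤ ∑ i, ∑ μ ∈ R, ∑ j, c μ i j * hMh.eigenvalues j ^ α :=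
        Finset.sum_le_sum fun i _ => hjensen i
    _ = ∑ μ ∈ R, ∑ j, (∑ i, c μ i j) * hMh.eigenvalues j ^ α := by
        rw [Finset.sum_comm]
        refine Finset.sum_congr rfl fun μ _ => ?_
        rw [Finset.sum_comm]
        refine Finset.sum_congr rfl fun j _ => ?_
        rw [← Finset.sum_mul]
    _ = ∑ j, (∑ μ ∈ R, ∑ i, c μ i j) * hMh.eigenvalues j ^ α := by
        rw [Finset.sum_comm]
        refine Finset.sum_congr rfl fun j _ => ?_
        rw [← Finset.sum_mul]
    _ = ∑ j, hMh.eigenvalues j ^ α := by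
        refine Finset.sum_congr rfl fun j _ => ?_
        rw [hcol j, one_mul]

end SandAux
end Aux3

/-- The sandwiched Rényi quasi-entropy does not increase in the first argument under pinching
with respect to the second argument: `Q̃_α(𝒫_σ(ρ), σ) ≤ Q̃_α(ρ, σ)` for `α ≥ 1`. -/
theorem sandwichedQ_pinching_le {ι : Type} [Fintype ι] [DecidableEq ι]
    (α : ℝ) (hα : 1 ≤ α)
    (ρ σ : Matrix ι ι ℂ)
    (hρ : ρ.PosSemidef) (hσ : σ.PosSemidef) (hsupp : SuppLE ρ σ) :
    sandwichedQ α (pinching σ ρ) σ ≤ sandwichedQ α ρ σ := by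
  classical
  rw [sandwichedQ, sandwichedQ, SandAux.psdRpow_pinching hσ.1 ((1 - α) / (2 * α)) ρ]
  have hS : (psdRpow σ ((1 - α) / (2 * α))).IsHermitian :=
    SandAux.psdRpow_isHermitian ((1 - α) / (2 * α))
  have hPSD : (psdRpow σ ((1 - α) / (2 * α)) * ρ * psdRpow σ ((1 - α) / (2 * α))).PosSemidef := by
    have := hρ.mul_mul_conjTranspose_same (B := psdRpow σ ((1 - α) / (2 * α)))
    rwa [hS.eq] at this
  exact SandAux.traceRpow_pinching_le hσ.1 hPSD hα
end
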